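/- Let G=(V,E) be a directed acyclic graph on V=[p] containing all self-loops (i.e., the edge relation restricted to pairs of distinct vertices contains no directed cycle). Then for every symmetric positive definite p×p matrix C, the graphical continuous Lyapunov model M_{G,C} is globally identifiable. -/

import Mathlib

open Matrix MeasureTheory

/-- A real square matrix is *stable* if every eigenvalue (over `ℂ`) has strictly
negative real part. -/
def IsStableMat {n : Type*} [Fintype n] [DecidableEq n] (M : Matrix n n ℝ) : Prop :=
  ∀ μ ∈ spectrum ℂ (M.map (algebraMap ℝ ℂ)), μ.re < 0

/-- `M ∈ ℝ^E`: the matrix `M` is supported on the directed graph with edge set `E`,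
i.e. `M j i = 0` whenever `(i, j) ∉ E`. -/
def InSupp {n : Type*} (E : Set (n × n)) (M : Matrix n n ℝ) : Prop :=
  ∀ i j : n, (i, j) ∉ E → M j i = 0

/-- The graphical continuous Lyapunov model `M_{G,C}`: positive definite matrices `S`
such that `M * S + S * Mᵀ + C = 0` for some `M ∈ ℝ^E`. -/
def LyapModel {n : Type*} [Fintype n] [DecidableEq n] (E : Set (n × n))
    (C : Matrix n n ℝ) : Set (Matrix n n ℝ) :=
  {S | S.PosDef ∧ ∃ M : Matrix n n ℝ, InSupp E M ∧ M * S + S * Mᵀ + C = 0}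

/-- Global identifiability: no two stable matrices supported on `E` yield the same
solution of the Lyapunov equation.  (Since for stable `M` the Lyapunov equation has a
unique positive definite solution `Σ(M,C)`, this is equivalent to every fiber
`F_{G,C}(M₀)` being the singleton `{M₀}`.) -/
def GloballyIdentifiable {n : Type*} [Fintype n] [DecidableEq n] (E : Set (n × n))
    (C : Matrix n n ℝ) : Prop :=
  ∀ M₁ M₂ : Matrix n n ℝ,
    InSupp E M₁ → IsStableMat M₁ → InSupp E M₂ → IsStableMat M₂ →
    ∀ S : Matrix n n ℝ, S.PosDef →
      M₁ * S + S * M₁ᵀ + C = 0 → M₂ * S + S * M₂ᵀ + C = 0 → M₁ = M₂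

/-- A directed graph is *simple* if it has no 2-cycles between distinct nodes. -/
def IsSimpleDigraph {n : Type*} (E : Set (n × n)) : Prop :=
  ∀ i j : n, i ≠ j → (i, j) ∈ E → (j, i) ∉ E

/-- The fiber `F_{G,C}(M₀)`: all stable matrices supported on `E` whose Lyapunov
solution coincides with that of `M₀`, i.e. some positive definite `S` solves the
Lyapunov equation for both `M₀` and `M`. -/
def Fiber {n : Type*} [Fintype n] [DecidableEq n] (E : Set (n × n))
    (C M₀ : Matrix n n ℝ) : Set (Matrix n n ℝ) :=
  {M | InSupp E M ∧ IsStableMat M ∧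
    ∃ S : Matrix n n ℝ, S.PosDef ∧ M₀ * S + S * M₀ᵀ + C = 0 ∧ M * S + S * Mᵀ + C = 0}

/-- The identification of the coordinate space `ℝ^{|E|}` with the matrices in `ℝ^E`:
the coordinate attached to an edge `(i,j)` is the entry `M j i`. -/
def edgeMatrix {p : ℕ} (E : Finset (Fin p × Fin p)) (f : E → ℝ) :
    Matrix (Fin p) (Fin p) ℝ :=
  fun j i => if h : (i, j) ∈ E then f ⟨(i, j), h⟩ else 0

/-- Generic identifiability: the set of parameter vectors `f ∈ ℝ^{|E|}` whose matrix
is stable but whose fiber is not a singleton is a Lebesgue null set. -/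
def GenericallyIdentifiable {p : ℕ} (E : Finset (Fin p × Fin p))
    (C : Matrix (Fin p) (Fin p) ℝ) : Prop :=
  volume {f : E → ℝ | IsStableMat (edgeMatrix E f) ∧
    Fiber (E : Set (Fin p × Fin p)) C (edgeMatrix E f) ≠ {edgeMatrix E f}} = 0

/-- directed acyclic graphs (with all self-loops) give globally
identifiable models for every symmetric positive definite `C`. -/
theorem dag_globally_identifiable {p : ℕ}
    (E : Set (Fin p × Fin p)) (hloops : ∀ i : Fin p, (i, i) ∈ E)
    (hacyc : ∀ i : Fin p,
      ¬ Relation.TransGen (fun a b : Fin p => (a, b) ∈ E ∧ a ≠ b) i i)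
    (C : Matrix (Fin p) (Fin p) ℝ) (hC : C.PosDef) :
    GloballyIdentifiable E C := by
  intro M₁ M₂ h₁ hs₁ h₂ hs₂ S hS e₁ e₂
  set D := M₁ - M₂ with hD
  have hsym : ∀ a b : Fin p, S a b = S b a := by
    intro a b
    have := hS.1
    have h := congrFun (congrFun this a) b
    simpa [Matrix.conjTranspose_apply] using h.symm
  have hskew : D * S + (D * S)ᵀ = 0 := by
    have hDS : D * S + S * Dᵀ = 0 := by
      have h := sub_eq_zero.2 (e₁.trans e₂.symm)
      have : (M₁ - M₂) * S + S * (M₁ - M₂)ᵀ = 0 := by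
        rw [Matrix.transpose_sub, Matrix.sub_mul, Matrix.mul_sub]
        calc M₁ * S - M₂ * S + (S * M₁ᵀ - S * M₂ᵀ)
            = (M₁ * S + S * M₁ᵀ + C) - (M₂ * S + S * M₂ᵀ + C) := by abel
          _ = 0 := by rw [e₁, e₂, sub_zero]
      simpa [hD] using this
    have hST : (D * S)ᵀ = S * Dᵀ := by
      rw [Matrix.transpose_mul]
      congr 1
      ext a b
      exact hsym b a
    rw [hST]; exact hDS
  have hskew' : ∀ a b : Fin p, (D * S) a b = - (D * S) b a := by
    intro a b
    have h := congrFun (congrFun hskew a) b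
    simp only [Matrix.add_apply, Matrix.transpose_apply, Matrix.zero_apply] at h
    linarith
  set r : Fin p → Fin p → Prop := fun a b => (a, b) ∈ E ∧ a ≠ b with hr
  have hwf : WellFounded (Relation.TransGen r) := by
    have h1 : IsIrrefl (Fin p) (Relation.TransGen r) := ⟨hacyc⟩
    have h2 : IsTrans (Fin p) (Relation.TransGen r) :=
      ⟨fun _ _ _ ha hb => Relation.TransGen.trans ha hb⟩
    exact Finite.wellFounded_of_trans_of_irrefl _
  have key : ∀ k : Fin p, ∀ m : Fin p, D k m = 0 := by
    intro k
    refine hwf.induction (C := fun k => ∀ m : Fin p, D k m = 0) k ?_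
    intro k IH
    by_contra hne
    push_neg at hne
    set w : Fin p → ℝ := fun m => D k m with hw
    have hwne : w ≠ 0 := by
      obtain ⟨m, hm⟩ := hne
      intro h0
      exact hm (congrFun h0 m)
    have hpos := hS.dotProduct_mulVec_pos hwne
    have hzero : dotProduct (star w) (S.mulVec w) = 0 := by
      have hterm : ∀ j : Fin p, w j * (S.mulVec w) j = 0 := by
        intro j
        by_cases hj : w j = 0
        · rw [hj, zero_mul]
        · have hEjk : (j, k) ∈ E := by
            by_contra hE
            have z1 := h₁ j k hE
            have z2 := h₂ j k hE
            apply hj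
            simp [hw, hD, Matrix.sub_apply, z1, z2]
          have hDSkj : (D * S) k j = 0 := by
            by_cases hjk : j = k
            · subst hjk
              have := hskew' j j
              linarith
            · have hrjk : Relation.TransGen r j k := Relation.TransGen.single ⟨hEjk, hjk⟩
              have hrow := IH j hrjk
              rw [hskew' k j]
              have : (D * S) j k = 0 := by
                rw [Matrix.mul_apply]
                exact Finset.sum_eq_zero fun m _ => by rw [hrow m, zero_mul]
              rw [this, neg_zero]
          have hmv : (S.mulVec w) j = (D * S) k j := by
            rw [Matrix.mulVec, dotProduct, Matrix.mul_apply]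
            exact Finset.sum_congr rfl fun m _ => by
              rw [hsym j m, hw]; ring
          rw [hmv, hDSkj, mul_zero]
      rw [dotProduct]
      refine Finset.sum_eq_zero fun j _ => ?_
      simpa using hterm j
    rw [hzero] at hpos
    exact lt_irrefl 0 hpos
  have : M₁ - M₂ = 0 := by
    ext a b
    exact key a b
  exact sub_eq_zero.1 this
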